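/- Every quasi-copula Q on [0,1]² lies in the closure, with respect to the supremum norm, of the linear span of the set of copulas. -/

import Mathlib

open Set

/-- A bivariate copula (conditions imposed on the unit square). -/
def IsCopula (C : ℝ → ℝ → ℝ) : Prop :=
  (∀ x ∈ Icc (0:ℝ) 1, C x 0 = 0 ∧ C 0 x = 0 ∧ C x 1 = x ∧ C 1 x = x) ∧
  (∀ x₁ ∈ Icc (0:ℝ) 1, ∀ x₂ ∈ Icc (0:ℝ) 1, ∀ y₁ ∈ Icc (0:ℝ) 1, ∀ y₂ ∈ Icc (0:ℝ) 1,
    x₁ ≤ x₂ → y₁ ≤ y₂ → 0 ≤ C x₂ y₂ - C x₁ y₂ - C x₂ y₁ + C x₁ y₁)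

/-- A bivariate quasi-copula (conditions imposed on the unit square). -/
def IsQuasiCopula (Q : ℝ → ℝ → ℝ) : Prop :=
  (∀ x ∈ Icc (0:ℝ) 1, Q x 0 = 0 ∧ Q 0 x = 0 ∧ Q x 1 = x ∧ Q 1 x = x) ∧
  (∀ x₁ ∈ Icc (0:ℝ) 1, ∀ x₂ ∈ Icc (0:ℝ) 1, ∀ y ∈ Icc (0:ℝ) 1,
    x₁ ≤ x₂ → Q x₁ y ≤ Q x₂ y) ∧
  (∀ x ∈ Icc (0:ℝ) 1, ∀ y₁ ∈ Icc (0:ℝ) 1, ∀ y₂ ∈ Icc (0:ℝ) 1,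
    y₁ ≤ y₂ → Q x y₁ ≤ Q x y₂) ∧
  (∀ x₁ ∈ Icc (0:ℝ) 1, ∀ x₂ ∈ Icc (0:ℝ) 1, ∀ y₁ ∈ Icc (0:ℝ) 1, ∀ y₂ ∈ Icc (0:ℝ) 1,
    |Q x₂ y₂ - Q x₁ y₁| ≤ |x₂ - x₁| + |y₂ - y₁|)

/-- Q-volume of the dyadic rectangle R_{ij}^n = [i/2^n,(i+1)/2^n] × [j/2^n,(j+1)/2^n]
(indices shifted by one with respect to the paper). -/
noncomputable def dyadVol (Q : ℝ → ℝ → ℝ) (n : ℕ) (i j : Fin (2^n)) : ℝ :=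
  Q (((i : ℕ) + 1) / 2^n) (((j : ℕ) + 1) / 2^n)
    - Q ((i : ℕ) / 2^n) (((j : ℕ) + 1) / 2^n)
    - Q (((i : ℕ) + 1) / 2^n) ((j : ℕ) / 2^n)
    + Q ((i : ℕ) / 2^n) ((j : ℕ) / 2^n)

/-- The set of all row/column sums of positive parts of dyadic volumes, normalized by
strip width; α_Q is its supremum. -/
noncomputable def alphaSet (Q : ℝ → ℝ → ℝ) : Set ℝ :=
  {r | ∃ n : ℕ, 1 ≤ n ∧
    ((∃ i : Fin (2^n), r = 2^n * ∑ j : Fin (2^n), max (dyadVol Q n i j) 0) ∨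
     (∃ j : Fin (2^n), r = 2^n * ∑ i : Fin (2^n), max (dyadVol Q n i j) 0))}



/-- weight: fraction of the i-th cell [i/N,(i+1)/N] covered by [0,x]. -/
noncomputable def wfn (N i : ℕ) (x : ℝ) : ℝ := max 0 (min ((N:ℝ)*x - i) 1)

/-- Q-volume of grid cell. -/
noncomputable def Avol (Q : ℝ → ℝ → ℝ) (N i j : ℕ) : ℝ :=
  Q (((i:ℝ)+1)/N) (((j:ℝ)+1)/N) - Q ((i:ℝ)/N) (((j:ℝ)+1)/N)
    - Q (((i:ℝ)+1)/N) ((j:ℝ)/N) + Q ((i:ℝ)/N) ((j:ℝ)/N)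

noncomputable def Gfn (Q : ℝ → ℝ → ℝ) (N : ℕ) (x y : ℝ) : ℝ :=
  ∑ i ∈ Finset.range N, ∑ j ∈ Finset.range N, Avol Q N i j * (wfn N i x * wfn N j y)

noncomputable def Cfn (Q : ℝ → ℝ → ℝ) (N : ℕ) (x y : ℝ) : ℝ :=
  ∑ i ∈ Finset.range N, ∑ j ∈ Finset.range N,
    ((Avol Q N i j + 1/N) / (1+N)) * (wfn N i x * wfn N j y)

lemma wfn_nonneg (N i : ℕ) (x : ℝ) : 0 ≤ wfn N i x := le_max_left _ _

lemma wfn_le_one (N i : ℕ) (x : ℝ) : wfn N i x ≤ 1 :=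
  max_le zero_le_one (min_le_right _ _)

lemma wfn_mono (N i : ℕ) {x₁ x₂ : ℝ} (h : x₁ ≤ x₂) : wfn N i x₁ ≤ wfn N i x₂ := by
  unfold wfn
  have : (N:ℝ)*x₁ - i ≤ (N:ℝ)*x₂ - i := by
    have := mul_le_mul_of_nonneg_left h (Nat.cast_nonneg N : (0:ℝ) ≤ N); linarith
  exact max_le_max le_rfl (min_le_min this le_rfl)

lemma wfn_one (N i : ℕ) (h : i < N) : wfn N i 1 = 1 := by
  unfold wfn
  have : (1:ℝ) ≤ (N:ℝ)*1 - i := by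
    have : (i:ℝ) + 1 ≤ N := by exact_mod_cast h
    linarith
  rw [min_eq_right this, max_eq_right zero_le_one]

lemma wfn_eq_one (N i : ℕ) {x : ℝ} (h : (i:ℝ) + 1 ≤ (N:ℝ)*x) : wfn N i x = 1 := by
  unfold wfn
  rw [min_eq_right (by linarith), max_eq_right zero_le_one]

lemma wfn_eq_zero (N i : ℕ) {x : ℝ} (h : (N:ℝ)*x ≤ i) : wfn N i x = 0 := by
  unfold wfn
  rw [max_eq_left (le_trans (min_le_left _ _) (by linarith))]

lemma wfn_zero (N i : ℕ) : wfn N i 0 = 0 :=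
  wfn_eq_zero N i (by simp)

/-- Cell index containing x, capped at N-1. -/
lemma exists_cell (N : ℕ) (hN : 1 ≤ N) {x : ℝ} (hx : x ∈ Icc (0:ℝ) 1) :
    ∃ k : ℕ, k + 1 ≤ N ∧ (k:ℝ) ≤ (N:ℝ)*x ∧ (N:ℝ)*x ≤ k + 1 := by
  obtain ⟨hx0, hx1⟩ := hx
  have hNpos : (0:ℝ) < N := by exact_mod_cast hN
  have hnn : (0:ℝ) ≤ (N:ℝ)*x := by positivity
  have hub : (N:ℝ)*x ≤ N := by nlinarith
  rcases le_or_gt (N:ℝ) (⌊(N:ℝ)*x⌋₊ : ℝ) with h | h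
  · refine ⟨N - 1, by omega, ?_, ?_⟩
    · have : ((N-1:ℕ):ℝ) = (N:ℝ) - 1 := by
        have : (1:ℕ) ≤ N := hN
        push_cast [Nat.cast_sub this]; ring
      rw [this]
      have := Nat.floor_le hnn
      linarith
    · have : ((N-1:ℕ):ℝ) + 1 = (N:ℝ) := by
        push_cast [Nat.cast_sub hN]; ring
      rw [this]; exact hub
  · refine ⟨⌊(N:ℝ)*x⌋₊, ?_, Nat.floor_le hnn, ?_⟩
    · have : (⌊(N:ℝ)*x⌋₊ : ℝ) < N := h
      exact_mod_cast Nat.cast_lt.mp (by exact_mod_cast this)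
    · exact (Nat.lt_floor_add_one _).le

/-- Weighted sums against the weights collapse to a linear interpolation. -/
lemma sum_wfn_eq (N k : ℕ) {x : ℝ} (hk : k + 1 ≤ N) (h1 : (k:ℝ) ≤ (N:ℝ)*x)
    (h2 : (N:ℝ)*x ≤ k + 1) (c : ℕ → ℝ) :
    ∑ i ∈ Finset.range N, c i * wfn N i x
      = (1 - ((N:ℝ)*x - k)) * (∑ i ∈ Finset.range k, c i)
        + ((N:ℝ)*x - k) * (∑ i ∈ Finset.range (k+1), c i) := by
  have hsub : Finset.range (k+1) ⊆ Finset.range N := Finset.range_subset_range.mpr hk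
  have hzero : ∀ i ∈ Finset.range N, i ∉ Finset.range (k+1) → c i * wfn N i x = 0 := by
    intro i _ hi
    have : k + 1 ≤ i := by simpa using hi
    have : ((k:ℝ)+1) ≤ (i:ℝ) := by exact_mod_cast this
    rw [wfn_eq_zero N i (by linarith), mul_zero]
  rw [← Finset.sum_subset hsub hzero, Finset.sum_range_succ]
  have hck : ∀ i ∈ Finset.range k, c i * wfn N i x = c i := by
    intro i hi
    have : i < k := Finset.mem_range.mp hi
    have : (i:ℝ) + 1 ≤ (k:ℝ) := by exact_mod_cast this
    rw [wfn_eq_one N i (by linarith), mul_one]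
  rw [Finset.sum_congr rfl hck]
  have hwk : wfn N k x = (N:ℝ)*x - k := by
    unfold wfn
    rw [min_eq_left (by linarith), max_eq_right (by linarith)]
  rw [hwk, Finset.sum_range_succ]
  ring

/-- Sum of all weights is N*x. -/
lemma sum_wfn_total (N : ℕ) (hN : 1 ≤ N) {x : ℝ} (hx : x ∈ Icc (0:ℝ) 1) :
    ∑ i ∈ Finset.range N, wfn N i x = (N:ℝ)*x := by
  obtain ⟨k, hk, h1, h2⟩ := exists_cell N hN hx
  have := sum_wfn_eq N k hk h1 h2 (fun _ => 1)
  simp only [one_mul] at this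
  rw [show (fun i => wfn N i x) = fun i => 1 * wfn N i x by funext i; rw [one_mul]] at *
  simp only [Finset.sum_const, Finset.card_range, nsmul_eq_mul, mul_one] at this
  calc ∑ i ∈ Finset.range N, 1 * wfn N i x = _ := this
    _ = (N:ℝ)*x := by push_cast; ring

lemma div_mem_Icc (N m : ℕ) (hN : 1 ≤ N) (h : m ≤ N) : (m:ℝ)/N ∈ Icc (0:ℝ) 1 := by
  have hNpos : (0:ℝ) < N := by exact_mod_cast hN
  constructor
  · positivity
  · rw [div_le_one hNpos]; exact_mod_cast h

section QC
variable {Q : ℝ → ℝ → ℝ} (hQ : IsQuasiCopula Q) (N : ℕ) (hN : 1 ≤ N)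
include hQ hN

lemma Avol_row_sum {i l : ℕ} (hi : i + 1 ≤ N) (hl : l ≤ N) :
    ∑ j ∈ Finset.range l, Avol Q N i j
      = Q (((i:ℝ)+1)/N) ((l:ℝ)/N) - Q ((i:ℝ)/N) ((l:ℝ)/N) := by
  have key : ∀ j ∈ Finset.range l, Avol Q N i j
      = (fun m : ℕ => Q (((i:ℝ)+1)/N) ((m:ℝ)/N) - Q ((i:ℝ)/N) ((m:ℝ)/N)) (j+1)
        - (fun m : ℕ => Q (((i:ℝ)+1)/N) ((m:ℝ)/N) - Q ((i:ℝ)/N) ((m:ℝ)/N)) j := by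
    intro j _
    simp only [Avol]
    push_cast
    ring
  rw [Finset.sum_congr rfl key,
    Finset.sum_range_sub (fun m : ℕ => Q (((i:ℝ)+1)/N) ((m:ℝ)/N) - Q ((i:ℝ)/N) ((m:ℝ)/N)) l]
  have h1 : Q (((i:ℝ)+1)/N) (((0:ℕ):ℝ)/N) = 0 := by
    have := (hQ.1 (((i:ℝ)+1)/N) (by
      have : ((i:ℝ)+1)/N = ((i+1:ℕ):ℝ)/N := by push_cast; ring
      rw [this]; exact div_mem_Icc N (i+1) hN hi)).1
    simpa using this
  have h2 : Q ((i:ℝ)/N) (((0:ℕ):ℝ)/N) = 0 := by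
    have := (hQ.1 ((i:ℝ)/N) (div_mem_Icc N i hN (by omega))).1
    simpa using this
  simp only [h1, h2]
  ring

lemma Avol_grid {k l : ℕ} (hk : k ≤ N) (hl : l ≤ N) :
    ∑ i ∈ Finset.range k, ∑ j ∈ Finset.range l, Avol Q N i j
      = Q ((k:ℝ)/N) ((l:ℝ)/N) := by
  have key : ∀ i ∈ Finset.range k, ∑ j ∈ Finset.range l, Avol Q N i j
      = (fun m : ℕ => Q ((m:ℝ)/N) ((l:ℝ)/N)) (i+1) - (fun m : ℕ => Q ((m:ℝ)/N) ((l:ℝ)/N)) i := by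
    intro i hi
    have hi' : i + 1 ≤ N := by have := Finset.mem_range.mp hi; omega
    rw [Avol_row_sum hQ N hN hi' hl]
    push_cast; ring
  rw [Finset.sum_congr rfl key,
    Finset.sum_range_sub (fun m : ℕ => Q ((m:ℝ)/N) ((l:ℝ)/N)) k]
  have h0 : Q (((0:ℕ):ℝ)/N) ((l:ℝ)/N) = 0 := by
    have := (hQ.1 ((l:ℝ)/N) (div_mem_Icc N l hN hl)).2.1
    simpa using this
  simp only [h0]
  ring

lemma Avol_row_total {i : ℕ} (hi : i + 1 ≤ N) :
    ∑ j ∈ Finset.range N, Avol Q N i j = 1/N := by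
  rw [Avol_row_sum hQ N hN hi le_rfl]
  have hNpos : (0:ℝ) < N := by exact_mod_cast hN
  have hNN : ((N:ℝ))/N = 1 := div_self hNpos.ne'
  rw [hNN]
  have h1 := (hQ.1 (((i:ℝ)+1)/N) (by
      have : ((i:ℝ)+1)/N = ((i+1:ℕ):ℝ)/N := by push_cast; ring
      rw [this]; exact div_mem_Icc N (i+1) hN hi)).2.2.1
  have h2 := (hQ.1 ((i:ℝ)/N) (div_mem_Icc N i hN (by omega))).2.2.1
  rw [h1, h2]
  ring

lemma Avol_col_total {j : ℕ} (hj : j + 1 ≤ N) :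
    ∑ i ∈ Finset.range N, Avol Q N i j = 1/N := by
  have key : ∀ i ∈ Finset.range N, Avol Q N i j
      = (fun m : ℕ => Q ((m:ℝ)/N) (((j:ℝ)+1)/N) - Q ((m:ℝ)/N) ((j:ℝ)/N)) (i+1)
        - (fun m : ℕ => Q ((m:ℝ)/N) (((j:ℝ)+1)/N) - Q ((m:ℝ)/N) ((j:ℝ)/N)) i := by
    intro i _
    simp only [Avol]; push_cast; ring
  rw [Finset.sum_congr rfl key,
    Finset.sum_range_sub (fun m : ℕ => Q ((m:ℝ)/N) (((j:ℝ)+1)/N) - Q ((m:ℝ)/N) ((j:ℝ)/N)) N]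
  have hNpos : (0:ℝ) < N := by exact_mod_cast hN
  have hNN : ((N:ℕ):ℝ)/N = 1 := div_self hNpos.ne'
  have hj1 : ((j:ℝ)+1)/N = ((j+1:ℕ):ℝ)/N := by push_cast; ring
  have m1 : ((j:ℝ)+1)/N ∈ Icc (0:ℝ) 1 := by rw [hj1]; exact div_mem_Icc N (j+1) hN hj
  have m2 : ((j:ℝ))/N ∈ Icc (0:ℝ) 1 := div_mem_Icc N j hN (by omega)
  have e1 := (hQ.1 (((j:ℝ)+1)/N) m1).2.2.2
  have e2 := (hQ.1 ((j:ℝ)/N) m2).2.2.2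
  have z1 := (hQ.1 (((j:ℝ)+1)/N) m1).2.1
  have z2 := (hQ.1 ((j:ℝ)/N) m2).2.1
  simp only [Nat.cast_zero, zero_div, hNN, e1, e2, z1, z2]
  ring

lemma Avol_lb {i j : ℕ} (hi : i + 1 ≤ N) (hj : j + 1 ≤ N) :
    0 ≤ Avol Q N i j + 1/N := by
  have hNpos : (0:ℝ) < N := by exact_mod_cast hN
  have mi : ((i:ℝ))/N ∈ Icc (0:ℝ) 1 := div_mem_Icc N i hN (by omega)
  have mi1 : ((i:ℝ)+1)/N ∈ Icc (0:ℝ) 1 := by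
    have : ((i:ℝ)+1)/N = ((i+1:ℕ):ℝ)/N := by push_cast; ring
    rw [this]; exact div_mem_Icc N (i+1) hN hi
  have mj : ((j:ℝ))/N ∈ Icc (0:ℝ) 1 := div_mem_Icc N j hN (by omega)
  have mj1 : ((j:ℝ)+1)/N ∈ Icc (0:ℝ) 1 := by
    have : ((j:ℝ)+1)/N = ((j+1:ℕ):ℝ)/N := by push_cast; ring
    rw [this]; exact div_mem_Icc N (j+1) hN hj
  -- monotonicity in x at height (j+1)/N
  have hmono := hQ.2.1 ((i:ℝ)/N) mi (((i:ℝ)+1)/N) mi1 (((j:ℝ)+1)/N) mj1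
    (by rw [div_le_div_iff_of_pos_right hNpos] <;> linarith)
  -- Lipschitz at height j/N
  have hlip := hQ.2.2.2 ((i:ℝ)/N) mi (((i:ℝ)+1)/N) mi1 ((j:ℝ)/N) mj ((j:ℝ)/N) mj
  have habs : |Q (((i:ℝ)+1)/N) ((j:ℝ)/N) - Q ((i:ℝ)/N) ((j:ℝ)/N)|
      ≤ |((i:ℝ)+1)/N - (i:ℝ)/N| + |((j:ℝ)/N) - ((j:ℝ)/N)| := hlip
  have hd : ((i:ℝ)+1)/N - (i:ℝ)/N = 1/N := by field_simp; ring
  rw [hd, sub_self, abs_zero, add_zero] at habs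
  have h1N : |(1:ℝ)/N| = 1/N := abs_of_pos (by positivity)
  rw [h1N] at habs
  have := (abs_le.mp habs).2
  simp only [Avol]
  linarith

end QC

lemma one_add_N_ne (N : ℕ) : (1:ℝ) + N ≠ 0 := by positivity

lemma Cfn_isCopula {Q : ℝ → ℝ → ℝ} (hQ : IsQuasiCopula Q) (N : ℕ) (hN : 1 ≤ N) :
    IsCopula (Cfn Q N) := by
  have hNpos : (0:ℝ) < N := by exact_mod_cast hN
  have hN0 : (N:ℝ) ≠ 0 := hNpos.ne'
  have h1N : (1:ℝ) + N ≠ 0 := one_add_N_ne N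
  constructor
  · intro x hx
    refine ⟨?_, ?_, ?_, ?_⟩
    · simp [Cfn, wfn_zero]
    · simp [Cfn, wfn_zero]
    · -- C x 1 = x
      have hstep : ∀ i ∈ Finset.range N,
          (∑ j ∈ Finset.range N, ((Avol Q N i j + 1/N)/(1+N)) * (wfn N i x * wfn N j 1))
            = (1/N) * wfn N i x := by
        intro i hi
        have hi' : i + 1 ≤ N := Finset.mem_range.mp hi
        have h1 : ∀ j ∈ Finset.range N, ((Avol Q N i j + 1/N)/(1+N)) * (wfn N i x * wfn N j 1)
            = (Avol Q N i j + 1/N) * wfn N i x / (1+N) := by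
          intro j hj
          rw [wfn_one N j (Finset.mem_range.mp hj)]
          ring
        rw [Finset.sum_congr rfl h1, ← Finset.sum_div, ← Finset.sum_mul,
          Finset.sum_add_distrib, Avol_row_total hQ N hN hi', Finset.sum_const,
          Finset.card_range, nsmul_eq_mul]
        field_simp
      rw [Cfn, Finset.sum_congr rfl hstep, ← Finset.mul_sum, sum_wfn_total N hN hx]
      field_simp
    · -- C 1 x = x
      have hswap : Cfn Q N 1 x = ∑ j ∈ Finset.range N, ∑ i ∈ Finset.range N,
          ((Avol Q N i j + 1/N)/(1+N)) * (wfn N i 1 * wfn N j x) := by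
        rw [Cfn]; exact Finset.sum_comm
      rw [hswap]
      have hstep : ∀ j ∈ Finset.range N,
          (∑ i ∈ Finset.range N, ((Avol Q N i j + 1/N)/(1+N)) * (wfn N i 1 * wfn N j x))
            = (1/N) * wfn N j x := by
        intro j hj
        have hj' : j + 1 ≤ N := Finset.mem_range.mp hj
        have h1 : ∀ i ∈ Finset.range N, ((Avol Q N i j + 1/N)/(1+N)) * (wfn N i 1 * wfn N j x)
            = (Avol Q N i j + 1/N) * wfn N j x / (1+N) := by
          intro i hi
          rw [wfn_one N i (Finset.mem_range.mp hi)]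
          ring
        rw [Finset.sum_congr rfl h1, ← Finset.sum_div, ← Finset.sum_mul,
          Finset.sum_add_distrib, Avol_col_total hQ N hN hj', Finset.sum_const,
          Finset.card_range, nsmul_eq_mul]
        field_simp
      rw [Finset.sum_congr rfl hstep, ← Finset.mul_sum, sum_wfn_total N hN hx]
      field_simp
  · intro x₁ _ x₂ _ y₁ _ y₂ _ hx hy
    have key : Cfn Q N x₂ y₂ - Cfn Q N x₁ y₂ - Cfn Q N x₂ y₁ + Cfn Q N x₁ y₁
        = ∑ i ∈ Finset.range N, ∑ j ∈ Finset.range N,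
            ((Avol Q N i j + 1/N)/(1+N)) *
              ((wfn N i x₂ - wfn N i x₁) * (wfn N j y₂ - wfn N j y₁)) := by
      simp only [Cfn, ← Finset.sum_sub_distrib, ← Finset.sum_add_distrib]
      exact Finset.sum_congr rfl fun i _ => Finset.sum_congr rfl fun j _ => by ring
    rw [key]
    apply Finset.sum_nonneg
    intro i hi
    apply Finset.sum_nonneg
    intro j hj
    apply mul_nonneg
    · apply div_nonneg (Avol_lb hQ N hN (Finset.mem_range.mp hi) (Finset.mem_range.mp hj))
      positivity
    · exact mul_nonneg (sub_nonneg.mpr (wfn_mono N i hx)) (sub_nonneg.mpr (wfn_mono N j hy))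

lemma prod_isCopula : IsCopula (fun x y => x * y) := by
  constructor
  · intro x _
    refine ⟨by ring, by ring, by ring, by ring⟩
  · intro x₁ _ x₂ _ y₁ _ y₂ _ hx hy
    simp only
    nlinarith [mul_nonneg (sub_nonneg.mpr hx) (sub_nonneg.mpr hy)]

/-- The checkerboard combination agrees with the interpolant `Gfn` on the square. -/
lemma comb_eq_Gfn {Q : ℝ → ℝ → ℝ} (N : ℕ) (hN : 1 ≤ N) {x y : ℝ}
    (hx : x ∈ Icc (0:ℝ) 1) (hy : y ∈ Icc (0:ℝ) 1) :
    (1 + (N:ℝ)) * Cfn Q N x y - N * (x * y) = Gfn Q N x y := by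
  have hNpos : (0:ℝ) < N := by exact_mod_cast hN
  have h1N : (1:ℝ) + N ≠ 0 := one_add_N_ne N
  have hsplit : (1 + (N:ℝ)) * Cfn Q N x y
      = Gfn Q N x y + (1/N) * ∑ i ∈ Finset.range N, ∑ j ∈ Finset.range N,
          wfn N i x * wfn N j y := by
    rw [Cfn, Gfn, Finset.mul_sum, Finset.mul_sum, ← Finset.sum_add_distrib]
    refine Finset.sum_congr rfl fun i _ => ?_
    rw [Finset.mul_sum, Finset.mul_sum, ← Finset.sum_add_distrib]
    refine Finset.sum_congr rfl fun j _ => ?_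
    field_simp
  have hww : ∑ i ∈ Finset.range N, ∑ j ∈ Finset.range N, wfn N i x * wfn N j y
      = ((N:ℝ)*x) * ((N:ℝ)*y) := by
    rw [← Finset.sum_mul_sum, sum_wfn_total N hN hx, sum_wfn_total N hN hy]
  rw [hsplit, hww]
  field_simp
  ring


lemma convex4_abs_le (θ φ d11 d12 d21 d22 M : ℝ) (hθ0 : 0 ≤ θ) (hθ1 : θ ≤ 1)
    (hφ0 : 0 ≤ φ) (hφ1 : φ ≤ 1)
    (h11 : |d11| ≤ M) (h12 : |d12| ≤ M) (h21 : |d21| ≤ M) (h22 : |d22| ≤ M) :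
    |(1-θ)*(1-φ)*d11 + (1-θ)*φ*d12 + θ*(1-φ)*d21 + θ*φ*d22| ≤ M := by
  rw [abs_le] at h11 h12 h21 h22 ⊢
  obtain ⟨a11, b11⟩ := h11
  obtain ⟨a12, b12⟩ := h12
  obtain ⟨a21, b21⟩ := h21
  obtain ⟨a22, b22⟩ := h22
  constructor
  · nlinarith [mul_nonneg (mul_nonneg (by linarith : (0:ℝ) ≤ 1-θ) (by linarith : (0:ℝ) ≤ 1-φ)) (by linarith : (0:ℝ) ≤ d11 + M),
      mul_nonneg (mul_nonneg (by linarith : (0:ℝ) ≤ 1-θ) hφ0) (by linarith : (0:ℝ) ≤ d12 + M),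
      mul_nonneg (mul_nonneg hθ0 (by linarith : (0:ℝ) ≤ 1-φ)) (by linarith : (0:ℝ) ≤ d21 + M),
      mul_nonneg (mul_nonneg hθ0 hφ0) (by linarith : (0:ℝ) ≤ d22 + M)]
  · nlinarith [mul_nonneg (mul_nonneg (by linarith : (0:ℝ) ≤ 1-θ) (by linarith : (0:ℝ) ≤ 1-φ)) (by linarith : (0:ℝ) ≤ M - d11),
      mul_nonneg (mul_nonneg (by linarith : (0:ℝ) ≤ 1-θ) hφ0) (by linarith : (0:ℝ) ≤ M - d12),
      mul_nonneg (mul_nonneg hθ0 (by linarith : (0:ℝ) ≤ M - d21)) (by linarith : (0:ℝ) ≤ 1-φ),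
      mul_nonneg (mul_nonneg hθ0 hφ0) (by linarith : (0:ℝ) ≤ M - d22)]

/-- `Gfn` is the bilinear interpolation of `Q` on the grid; it is within `2/N` of `Q`. -/
lemma Gfn_close {Q : ℝ → ℝ → ℝ} (hQ : IsQuasiCopula Q) (N : ℕ) (hN : 1 ≤ N) {x y : ℝ}
    (hx : x ∈ Icc (0:ℝ) 1) (hy : y ∈ Icc (0:ℝ) 1) :
    |Q x y - Gfn Q N x y| ≤ 2/N := by
  have hNpos : (0:ℝ) < N := by exact_mod_cast hN
  obtain ⟨k, hk, hk1, hk2⟩ := exists_cell N hN hx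
  obtain ⟨l, hl, hl1, hl2⟩ := exists_cell N hN hy
  set θ : ℝ := (N:ℝ)*x - k with hθ
  set φ : ℝ := (N:ℝ)*y - l with hφ
  -- Step 1: Gfn as interpolation in x
  have hstep1 : Gfn Q N x y
      = (1-θ) * (∑ i ∈ Finset.range k, ∑ j ∈ Finset.range N, Avol Q N i j * wfn N j y)
        + θ * (∑ i ∈ Finset.range (k+1), ∑ j ∈ Finset.range N, Avol Q N i j * wfn N j y) := by
    have e1 : Gfn Q N x y
        = ∑ i ∈ Finset.range N, (∑ j ∈ Finset.range N, Avol Q N i j * wfn N j y) * wfn N i x := by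
      rw [Gfn]
      refine Finset.sum_congr rfl fun i _ => ?_
      rw [Finset.sum_mul]
      exact Finset.sum_congr rfl fun j _ => by ring
    rw [e1, sum_wfn_eq N k hk hk1 hk2]
  -- Step 2: each x-slice as interpolation in y
  have hstep2 : ∀ m : ℕ, m ≤ N →
      (∑ i ∈ Finset.range m, ∑ j ∈ Finset.range N, Avol Q N i j * wfn N j y)
        = (1-φ) * Q ((m:ℝ)/N) ((l:ℝ)/N) + φ * Q ((m:ℝ)/N) (((l+1:ℕ):ℝ)/N) := by
    intro m hm
    have e2 : (∑ i ∈ Finset.range m, ∑ j ∈ Finset.range N, Avol Q N i j * wfn N j y)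
        = ∑ j ∈ Finset.range N, (∑ i ∈ Finset.range m, Avol Q N i j) * wfn N j y := by
      rw [Finset.sum_comm]
      exact Finset.sum_congr rfl fun j _ => by rw [Finset.sum_mul]
    rw [e2, sum_wfn_eq N l hl hl1 hl2]
    have g1 : ∑ j ∈ Finset.range l, ∑ i ∈ Finset.range m, Avol Q N i j
        = Q ((m:ℝ)/N) ((l:ℝ)/N) := by
      rw [Finset.sum_comm]; exact Avol_grid hQ N hN hm (by omega)
    have g2 : ∑ j ∈ Finset.range (l+1), ∑ i ∈ Finset.range m, Avol Q N i j
        = Q ((m:ℝ)/N) (((l+1:ℕ):ℝ)/N) := by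
      rw [Finset.sum_comm]; exact Avol_grid hQ N hN hm hl
    rw [g1, g2]
  have hG : Gfn Q N x y
      = (1-θ) * ((1-φ) * Q ((k:ℝ)/N) ((l:ℝ)/N) + φ * Q ((k:ℝ)/N) (((l+1:ℕ):ℝ)/N))
        + θ * ((1-φ) * Q (((k+1:ℕ):ℝ)/N) ((l:ℝ)/N) + φ * Q (((k+1:ℕ):ℝ)/N) (((l+1:ℕ):ℝ)/N)) := by
    rw [hstep1, hstep2 k (by omega), hstep2 (k+1) hk]
  -- distances to the grid lines
  have dist_bound : ∀ (t : ℝ) (m : ℕ), (m:ℝ) ≤ (N:ℝ)*t → (N:ℝ)*t ≤ m + 1 →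
      |t - (m:ℝ)/N| ≤ 1/N ∧ |t - ((m+1:ℕ):ℝ)/N| ≤ 1/N := by
    intro t m h1 h2
    have e1 : t - (m:ℝ)/N = ((N:ℝ)*t - m)/N := by
      field_simp
      all_goals ring
    have e2 : t - ((m+1:ℕ):ℝ)/N = ((N:ℝ)*t - (m+1))/N := by
      push_cast
      field_simp
      all_goals ring
    constructor
    · rw [e1, abs_div, abs_of_pos hNpos, div_le_div_iff_of_pos_right hNpos, abs_le]
      constructor <;> linarith
    · rw [e2, abs_div, abs_of_pos hNpos, div_le_div_iff_of_pos_right hNpos, abs_le]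
      constructor <;> linarith
  obtain ⟨hxk, hxk1⟩ := dist_bound x k hk1 hk2
  obtain ⟨hyl, hyl1⟩ := dist_bound y l hl1 hl2
  -- corner membership
  have mem : ∀ m : ℕ, m ≤ N → ((m:ℝ))/N ∈ Icc (0:ℝ) 1 := fun m hm => div_mem_Icc N m hN hm
  have mk : ((k:ℝ))/N ∈ Icc (0:ℝ) 1 := mem k (by omega)
  have mk1 : (((k+1:ℕ)):ℝ)/N ∈ Icc (0:ℝ) 1 := mem (k+1) hk
  have ml : ((l:ℝ))/N ∈ Icc (0:ℝ) 1 := mem l (by omega)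
  have ml1 : (((l+1:ℕ)):ℝ)/N ∈ Icc (0:ℝ) 1 := mem (l+1) hl
  -- Lipschitz estimates for the four corners
  have corner : ∀ (a b : ℝ), a ∈ Icc (0:ℝ) 1 → b ∈ Icc (0:ℝ) 1 →
      |x - a| ≤ 1/N → |y - b| ≤ 1/N → |Q x y - Q a b| ≤ 2/N := by
    intro a b ha hb h1 h2
    have := hQ.2.2.2 a ha x hx b hb y hy
    calc |Q x y - Q a b| ≤ |x - a| + |y - b| := this
      _ ≤ 1/N + 1/N := add_le_add h1 h2
      _ = 2/N := by ring
  have c11 := corner _ _ mk ml hxk hyl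
  have c12 := corner _ _ mk ml1 hxk hyl1
  have c21 := corner _ _ mk1 ml hxk1 hyl
  have c22 := corner _ _ mk1 ml1 hxk1 hyl1
  -- convex combination
  have hθ0 : 0 ≤ θ := by rw [hθ]; linarith
  have hθ1 : θ ≤ 1 := by rw [hθ]; linarith
  have hφ0 : 0 ≤ φ := by rw [hφ]; linarith
  have hφ1 : φ ≤ 1 := by rw [hφ]; linarith
  have e : Q x y - Gfn Q N x y
      = (1-θ)*(1-φ)*(Q x y - Q ((k:ℝ)/N) ((l:ℝ)/N)) + (1-θ)*φ*(Q x y - Q ((k:ℝ)/N) (((l+1:ℕ):ℝ)/N))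
        + θ*(1-φ)*(Q x y - Q (((k+1:ℕ):ℝ)/N) ((l:ℝ)/N)) + θ*φ*(Q x y - Q (((k+1:ℕ):ℝ)/N) (((l+1:ℕ):ℝ)/N)) := by
    rw [hG]; ring
  rw [e]
  exact convex4_abs_le θ φ _ _ _ _ (2/N) hθ0 hθ1 hφ0 hφ1 c11 c12 c21 c22

theorem stmt12 (Q : ℝ → ℝ → ℝ) (hQ : IsQuasiCopula Q) :
    ∀ ε > (0:ℝ), ∃ f ∈ Submodule.span ℝ {f : ℝ → ℝ → ℝ | IsCopula f},
      ∀ x ∈ Icc (0:ℝ) 1, ∀ y ∈ Icc (0:ℝ) 1, |Q x y - f x y| ≤ ε := by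
  intro ε hε
  set N : ℕ := max 1 ⌈2/ε⌉₊ with hNdef
  have hN : 1 ≤ N := le_max_left _ _
  have hNpos : (0:ℝ) < N := by exact_mod_cast hN
  have h2N : 2/(N:ℝ) ≤ ε := by
    have h1 : (2/ε) ≤ (⌈2/ε⌉₊ : ℝ) := Nat.le_ceil _
    have h2 : ((⌈2/ε⌉₊ : ℕ) : ℝ) ≤ (N:ℝ) := by exact_mod_cast le_max_right 1 ⌈2/ε⌉₊
    rw [div_le_iff₀ hNpos]
    rw [div_le_iff₀ hε] at h1
    nlinarith
  refine ⟨(1+(N:ℝ)) • Cfn Q N + (-(N:ℝ)) • ((fun x y => x * y) : ℝ → ℝ → ℝ), ?_, ?_⟩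
  · have hC : Cfn Q N ∈ {f : ℝ → ℝ → ℝ | IsCopula f} := Cfn_isCopula hQ N hN
    have hP : (fun x y : ℝ => x * y) ∈ {f : ℝ → ℝ → ℝ | IsCopula f} := prod_isCopula
    exact Submodule.add_mem _
      (Submodule.smul_mem _ _ (Submodule.subset_span hC))
      (Submodule.smul_mem _ _ (Submodule.subset_span hP))
  · intro x hx y hy
    have happ : ((1+(N:ℝ)) • Cfn Q N + (-(N:ℝ)) • (fun x y : ℝ => x * y)) x y
        = (1+(N:ℝ)) * Cfn Q N x y - (N:ℝ) * (x * y) := by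
      simp [Pi.add_apply, Pi.smul_apply, smul_eq_mul]
      ring
    rw [happ, comb_eq_Gfn N hN hx hy]
    exact le_trans (Gfn_close hQ N hN hx hy) h2N
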